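/- arXiv:2205.12267 — 3 statements merged into one kernel-verified Lean document; each statement's English description precedes it below -/
import Mathlib

section
/- Let A be a real l×l matrix whose spectral radius ρ(A) (the largest absolute value of its complex eigenvalues) satisfies ρ(A) ≥ 1, let W be a symmetric positive definite real l×l matrix, let P̄ be a symmetric positive semidefinite real l×l matrix, and let f(X) = A X Aᵀ + W. Then Tr(f^τ(P̄)) ≥ τ · λ_min(W) for every natural number τ, where λ_min(W) > 0 is the smallest eigenvalue of W; in particular, Tr(f^τ(P̄)) → ∞ as τ → ∞, i.e., the remote estimation cost grows unboundedly with continuously increasing age of information. -/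
open Matrix Filter

/-- The spectral radius of a real square matrix: the largest absolute value of its
complex eigenvalues. -/
noncomputable def specRad {l : ℕ} (A : Matrix (Fin l) (Fin l) ℝ) : ℝ :=
  sSup ((fun z : ℂ => ‖z‖) '' spectrum ℂ (A.map (algebraMap ℝ ℂ)))

private lemma trace_nonneg_of_psd {l : ℕ} {M : Matrix (Fin l) (Fin l) ℝ} (h : M.PosSemidef) :
    0 ≤ M.trace := by
  refine Finset.sum_nonneg fun i _ => ?_
  have := h.diag_nonneg (i := i)
  simpa [Matrix.diag] using this

private lemma exists_big_eigenvalue {l : ℕ} [NeZero l] (A : Matrix (Fin l) (Fin l) ℝ)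
    (hρ : 1 ≤ specRad A) :
    ∃ z ∈ spectrum ℂ (A.map (algebraMap ℝ ℂ)), 1 ≤ ‖z‖ := by
  set M := A.map (algebraMap ℝ ℂ)
  have hne : (spectrum ℂ M).Nonempty :=
    spectrum.nonempty_of_isAlgClosed_of_finiteDimensional ℂ M
  have hfin : (spectrum ℂ M).Finite := Matrix.finite_spectrum M
  have h1 : ((fun z : ℂ => ‖z‖) '' spectrum ℂ M).Nonempty := hne.image _
  have h2 : ((fun z : ℂ => ‖z‖) '' spectrum ℂ M).Finite := hfin.image _
  obtain ⟨z, hz, hq⟩ := h1.csSup_mem h2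
  exact ⟨z, hz, le_of_le_of_eq hρ hq.symm⟩

private lemma pow_trace_ge {l : ℕ} [NeZero l] (A : Matrix (Fin l) (Fin l) ℝ)
    (hz : ∃ z ∈ spectrum ℂ (A.map (algebraMap ℝ ℂ)), 1 ≤ ‖z‖) (k : ℕ) :
    1 ≤ ((A ^ k) * (A ^ k)ᵀ).trace := by
  obtain ⟨z, hz, habs⟩ := hz
  set M := A.map (algebraMap ℝ ℂ) with hM
  rw [← AlgEquiv.spectrum_eq (Matrix.toLinAlgEquiv' (R := ℂ) (n := Fin l)) M] at hz
  have hev := Module.End.HasEigenvalue.of_mem_spectrum hz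
  obtain ⟨v, hv⟩ := hev.exists_hasEigenvector
  have hv0 : v ≠ 0 := hv.right
  have hvapplied : M *ᵥ v = z • v := by
    have := hv.apply_eq_smul
    rwa [Matrix.toLinAlgEquiv'_apply] at this
  have hpow : ∀ m : ℕ, (M ^ m) *ᵥ v = z ^ m • v := by
    intro m
    induction m with
    | zero => simp
    | succ m ih =>
      rw [pow_succ', ← Matrix.mulVec_mulVec, ih, Matrix.mulVec_smul, hvapplied]
      rw [smul_smul, pow_succ']; ring_nf
  set B := M ^ k with hB
  set S := ∑ j, ‖v j‖ ^ 2 with hS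
  have hSpos : 0 < S := by
    have hj : ∃ j, v j ≠ 0 := by
      by_contra h
      push_neg at h
      exact hv0 (funext h)
    obtain ⟨j, hj⟩ := hj
    refine Finset.sum_pos' (fun i _ => by positivity) ⟨j, Finset.mem_univ j, ?_⟩
    have : ‖v j‖ ≠ 0 := by simpa using hj
    positivity
  have hL : S ≤ ∑ i, ‖(B *ᵥ v) i‖ ^ 2 := by
    rw [hpow k]
    have : ∀ i, ‖(z ^ k • v) i‖ ^ 2
        = (‖z‖ ^ k) ^ 2 * ‖v i‖ ^ 2 := by
      intro i
      simp [Pi.smul_apply, norm_smul, norm_mul, mul_pow, norm_pow]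
    rw [Finset.sum_congr rfl fun i _ => this i, ← Finset.mul_sum]
    have h1 : (1 : ℝ) ≤ (‖z‖ ^ k) ^ 2 := by
      have : (1 : ℝ) ≤ ‖z‖ ^ k := one_le_pow₀ habs
      nlinarith
    nlinarith [hSpos]
  have hCS : ∑ i, ‖(B *ᵥ v) i‖ ^ 2
      ≤ (∑ i, ∑ j, ‖B i j‖ ^ 2) * S := by
    rw [Finset.sum_mul]
    refine Finset.sum_le_sum fun i _ => ?_
    have h1 : ‖(B *ᵥ v) i‖ ≤ ∑ j, ‖B i j‖ * ‖v j‖ := by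
      refine le_trans ?_ (Finset.sum_le_sum fun j _ => le_of_eq (norm_mul _ _))
      exact (norm_sum_le _ _).trans_eq' rfl
    have h2 : (∑ j, ‖B i j‖ * ‖v j‖) ^ 2
        ≤ (∑ j, ‖B i j‖ ^ 2) * S := by
      rw [hS]
      exact Finset.sum_mul_sq_le_sq_mul_sq _ _ _
    calc ‖(B *ᵥ v) i‖ ^ 2
        ≤ (∑ j, ‖B i j‖ * ‖v j‖) ^ 2 := by
          have := norm_nonneg ((B *ᵥ v) i)
          nlinarith [Finset.sum_nonneg (fun j (_ : j ∈ Finset.univ) =>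
            mul_nonneg (norm_nonneg (B i j)) (norm_nonneg (v j)))]
      _ ≤ _ := h2
  have hBmap : B = (A ^ k).map (algebraMap ℝ ℂ) := by
    rw [hB, hM]
    have : A.map (algebraMap ℝ ℂ) = (algebraMap ℝ ℂ).mapMatrix A := rfl
    rw [this, ← _root_.map_pow]
    rfl
  have hT : (∑ i, ∑ j, ‖B i j‖ ^ 2) = ((A ^ k) * (A ^ k)ᵀ).trace := by
    rw [Matrix.trace, hBmap]
    refine Finset.sum_congr rfl fun i _ => ?_
    rw [Matrix.diag_apply, Matrix.mul_apply]
    refine Finset.sum_congr rfl fun j _ => ?_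
    simp [Matrix.map_apply, Complex.norm_real, Real.norm_eq_abs, Matrix.transpose_apply, sq_abs, sq, abs_mul_self]
  have : S ≤ ((A ^ k) * (A ^ k)ᵀ).trace * S := by
    rw [← hT]; exact hL.trans hCS
  nlinarith [hSpos]

private lemma sub_smul_one_psd {l : ℕ} [NeZero l] {W : Matrix (Fin l) (Fin l) ℝ} (hW : W.PosDef) :
    (W - (⨅ i, hW.1.eigenvalues i) • (1 : Matrix (Fin l) (Fin l) ℝ)).PosSemidef := by
  set c := ⨅ i, hW.1.eigenvalues i with hc
  set U := (hW.1.eigenvectorUnitary : Matrix (Fin l) (Fin l) ℝ) with hU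
  have hUU : U * star U = 1 := Matrix.mem_unitaryGroup_iff.mp hW.1.eigenvectorUnitary.2
  have hdiag : (Matrix.diagonal (fun i => hW.1.eigenvalues i - c)).PosSemidef := by
    refine Matrix.PosSemidef.diagonal fun i => ?_
    have : c ≤ hW.1.eigenvalues i := ciInf_le (Finite.bddBelow_range _) i
    simp only [Pi.zero_apply]
    linarith
  have key : W - c • 1 = U * Matrix.diagonal (fun i => hW.1.eigenvalues i - c) * star U := by
    have hsp := hW.1.spectral_theorem
    simp only [Unitary.conjStarAlgAut_apply] at hsp
    have h2 : Matrix.diagonal (fun i => hW.1.eigenvalues i - c)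
        = Matrix.diagonal (RCLike.ofReal ∘ hW.1.eigenvalues) - c • 1 := by
      rw [Matrix.smul_one_eq_diagonal, Matrix.diagonal_sub]
      rfl
    rw [h2, Matrix.mul_sub, Matrix.sub_mul, ← hsp]
    congr 1
    rw [Matrix.mul_smul, Matrix.smul_mul, mul_one, hUU]
  rw [key, Matrix.star_eq_conjTranspose]
  exact hdiag.mul_mul_conjTranspose_same U

private lemma trace_mul_W_ge {l : ℕ} [NeZero l] {W : Matrix (Fin l) (Fin l) ℝ} (hW : W.PosDef)
    (B : Matrix (Fin l) (Fin l) ℝ) :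
    (⨅ i, hW.1.eigenvalues i) * (B * Bᵀ).trace ≤ (B * W * Bᵀ).trace := by
  set c := ⨅ i, hW.1.eigenvalues i with hc
  have h := (sub_smul_one_psd hW).mul_mul_conjTranspose_same B
  have h2 : B * (W - c • 1) * Bᴴ = B * W * Bᵀ - c • (B * Bᵀ) := by
    rw [Matrix.conjTranspose_eq_transpose_of_trivial]
    rw [Matrix.mul_sub, Matrix.sub_mul]
    congr 1
    rw [Matrix.mul_smul, Matrix.smul_mul, mul_one]
  rw [h2] at h
  have := trace_nonneg_of_psd h
  rw [Matrix.trace_sub, Matrix.trace_smul] at this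
  simp only [smul_eq_mul] at this
  linarith

/-- If `ρ(A) ≥ 1` and `W` is positive definite, the estimation cost `Tr(f^τ(P̄))`
grows at least linearly as `τ · λ_min(W)` with `λ_min(W) > 0`, hence it tends to
infinity as the age of information `τ` grows. -/
theorem cost_unbounded_of_unstable {l : ℕ} [NeZero l]
    (A W Pbar : Matrix (Fin l) (Fin l) ℝ)
    (hW : W.PosDef) (hP : Pbar.PosSemidef) (hρ : 1 ≤ specRad A) :
    0 < (⨅ i, hW.1.eigenvalues i) ∧
    (∀ τ : ℕ, (τ : ℝ) * (⨅ i, hW.1.eigenvalues i) ≤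
      ((fun Z : Matrix (Fin l) (Fin l) ℝ => A * Z * Aᵀ + W)^[τ] Pbar).trace) ∧
    Tendsto (fun τ : ℕ =>
        ((fun Z : Matrix (Fin l) (Fin l) ℝ => A * Z * Aᵀ + W)^[τ] Pbar).trace)
      atTop atTop := by
  have hPTG := pow_trace_ge A (exists_big_eigenvalue A hρ)
  set c := ⨅ i, hW.1.eigenvalues i with hc
  set f := fun Z : Matrix (Fin l) (Fin l) ℝ => A * Z * Aᵀ + W with hf
  have hcpos : 0 < c := by
    obtain ⟨i, hi⟩ := exists_eq_ciInf_of_finite (f := hW.1.eigenvalues)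
    rw [hc, ← hi]
    exact hW.eigenvalues_pos i
  set S := fun τ : ℕ => ∑ k ∈ Finset.range τ, A ^ k * W * (A ^ k)ᵀ with hS
  have hSsucc : ∀ τ, S (τ + 1) = A * S τ * Aᵀ + W := by
    intro τ
    rw [hS]
    simp only [Finset.sum_range_succ']
    rw [Finset.mul_sum, Finset.sum_mul]
    congr 1
    · refine Finset.sum_congr rfl fun k _ => ?_
      rw [pow_succ', Matrix.transpose_mul]
      noncomm_ring
    · simp
  have hdiff : ∀ τ, ((f^[τ] Pbar) - S τ).PosSemidef := by
    intro τ
    induction τ with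
    | zero => simpa [hS] using hP
    | succ τ ih =>
      rw [Function.iterate_succ_apply', hSsucc τ]
      have : f (f^[τ] Pbar) - (A * S τ * Aᵀ + W)
          = A * ((f^[τ] Pbar) - S τ) * Aᵀ := by
        rw [hf]
        simp only [Matrix.mul_sub, Matrix.sub_mul]
        abel
      rw [this, ← Matrix.conjTranspose_eq_transpose_of_trivial]
      exact ih.mul_mul_conjTranspose_same A
  have htrS : ∀ τ : ℕ, (τ : ℝ) * c ≤ (S τ).trace := by
    intro τ
    rw [hS, Matrix.trace_sum]
    calc (τ : ℝ) * c = ∑ _k ∈ Finset.range τ, c := by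
          rw [Finset.sum_const, Finset.card_range, nsmul_eq_mul]
      _ ≤ _ := by
          refine Finset.sum_le_sum fun k _ => ?_
          calc c = c * 1 := (mul_one c).symm
            _ ≤ c * ((A ^ k) * (A ^ k)ᵀ).trace :=
                mul_le_mul_of_nonneg_left (hPTG k) hcpos.le
            _ ≤ _ := trace_mul_W_ge hW (A ^ k)
  have hmain : ∀ τ : ℕ, (τ : ℝ) * c ≤ (f^[τ] Pbar).trace := by
    intro τ
    have h1 := trace_nonneg_of_psd (hdiff τ)
    rw [Matrix.trace_sub] at h1
    linarith [htrS τ]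
  refine ⟨hcpos, hmain, ?_⟩
  refine tendsto_atTop_mono hmain ?_
  exact Tendsto.atTop_mul_const hcpos tendsto_natCast_atTop_atTop
end

section
/- Let A be a real l×l matrix, W and P symmetric positive semidefinite real l×l matrices, and f(X) = A X Aᵀ + W. Then for every natural number τ, Tr(f^τ(P)) ≤ ‖A‖^{2τ} · Tr(P) + Tr(W) · Σ_{k=0}^{τ−1} ‖A‖^{2k}, where ‖A‖ denotes the operator (spectral) norm of A. -/
open Matrix
open scoped Matrix.Norms.L2Operator

lemma col_bound {l : ℕ} (A : Matrix (Fin l) (Fin l) ℝ) (v : Fin l → ℝ) :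
    ∑ i, (A.mulVec v i)^2 ≤ ‖A‖^2 * ∑ i, (v i)^2 := by
  have h := A.l2_opNorm_mulVec ((WithLp.toLp 2 v))
  have h2 := pow_le_pow_left₀ (norm_nonneg _) h 2
  rw [mul_pow] at h2
  simp only [EuclideanSpace.norm_eq] at h2
  rw [Real.sq_sqrt (by positivity), Real.sq_sqrt (by positivity)] at h2
  simpa [Real.norm_eq_abs, sq_abs] using h2

lemma trace_conj_le {l : ℕ} (A : Matrix (Fin l) (Fin l) ℝ) {X : Matrix (Fin l) (Fin l) ℝ}
    (hX : X.PosSemidef) : (A * X * Aᵀ).trace ≤ ‖A‖^2 * X.trace := by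
  obtain ⟨S, hSpsd, hSS⟩ : ∃ S : Matrix (Fin l) (Fin l) ℝ, S.PosSemidef ∧ S * S = X :=
    by open scoped MatrixOrder in exact ⟨CFC.sqrt X, (CFC.sqrt_nonneg X).posSemidef, CFC.sqrt_mul_sqrt_self X hX.nonneg⟩
  have hSt : Sᵀ = S := hSpsd.1
  have hsymm : ∀ i k : Fin l, S k i = S i k := fun i k => congrFun (congrFun hSt i) k
  have e1 : A * X * Aᵀ = (A * S) * (A * S)ᵀ := by
    rw [Matrix.transpose_mul, hSt, ← hSS]; noncomm_ring
  have e3 : ∀ M : Matrix (Fin l) (Fin l) ℝ, (M * Mᵀ).trace = ∑ j, ∑ i, (M i j)^2 := by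
    intro M
    simp only [Matrix.trace, Matrix.diag, Matrix.mul_apply, Matrix.transpose_apply, sq]
    rw [Finset.sum_comm]
  have e2 : X.trace = ∑ j, ∑ i, (S i j)^2 := by
    conv_lhs => rw [← hSS]
    nth_rewrite 1 [← hSt]
    rw [show Sᵀ * S = S * Sᵀ by rw [hSt], e3]
  rw [e1, e3, e2, Finset.mul_sum]
  apply Finset.sum_le_sum
  intro j _
  have hc : ∀ i, (A * S) i j = A.mulVec (fun k => S k j) i := by
    intro i; simp [Matrix.mul_apply, Matrix.mulVec, dotProduct]
  calc ∑ i, ((A * S) i j)^2 = ∑ i, (A.mulVec (fun k => S k j) i)^2 :=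
        Finset.sum_congr rfl fun i _ => by rw [hc i]
    _ ≤ ‖A‖^2 * ∑ i, (S i j)^2 := col_bound A _

/-- Trace bound on the iterates of `X ↦ A X Aᵀ + W` in terms of the operator
(spectral) norm of `A`. -/
theorem iterate_affine_trace_le {l : ℕ} (A W P : Matrix (Fin l) (Fin l) ℝ)
    (hW : W.PosSemidef) (hP : P.PosSemidef) (τ : ℕ) :
    ((fun Z : Matrix (Fin l) (Fin l) ℝ => A * Z * Aᵀ + W)^[τ] P).trace ≤
      ‖A‖ ^ (2 * τ) * P.trace + W.trace * ∑ k ∈ Finset.range τ, ‖A‖ ^ (2 * k) := by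
  set f : Matrix (Fin l) (Fin l) ℝ → Matrix (Fin l) (Fin l) ℝ :=
    fun Z => A * Z * Aᵀ + W with hf
  have hpsd : ∀ n, (f^[n] P).PosSemidef := by
    intro n
    induction n with
    | zero => simpa using hP
    | succ n ih =>
      rw [Function.iterate_succ_apply']
      exact ((ih.mul_mul_conjTranspose_same A).add hW)
  have hpow : ∀ k : ℕ, ‖A‖^(2*(k+1)) = ‖A‖^2 * ‖A‖^(2*k) := by
    intro k; rw [mul_add, mul_one, pow_add]; ring
  induction τ with
  | zero => simp
  | succ n ih =>
    rw [Function.iterate_succ_apply']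
    have h1 : (f (f^[n] P)).trace ≤ ‖A‖^2 * (f^[n] P).trace + W.trace := by
      simp only [hf, Matrix.trace_add]
      have := trace_conj_le A (hpsd n)
      linarith
    have hAnn : (0:ℝ) ≤ ‖A‖^2 := sq_nonneg _
    calc (f (f^[n] P)).trace ≤ ‖A‖^2 * (f^[n] P).trace + W.trace := h1
      _ ≤ ‖A‖^2 * (‖A‖ ^ (2 * n) * P.trace + W.trace * ∑ k ∈ Finset.range n, ‖A‖ ^ (2 * k)) + W.trace := by
          nlinarith [mul_le_mul_of_nonneg_left ih hAnn]
      _ = ‖A‖ ^ (2 * (n+1)) * P.trace + W.trace * ∑ k ∈ Finset.range (n+1), ‖A‖ ^ (2 * k) := by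
          rw [Finset.sum_range_succ', hpow n]
          simp_rw [hpow]
          rw [← Finset.mul_sum]
          ring
end

section
/- Fix a blocklength l > 0 and a number of data bits b ≥ 0, and define the finite-blocklength decoding failure probability ε(γ) = Q( (C(γ) − b/l) / √(V(γ)/l) ) for γ > 0, where C(γ) = log₂(1+γ), V(γ) = (1 − (1+γ)⁻²)(log₂ e)², and Q(x) = (1/√(2π)) ∫_x^∞ e^{−t²/2} dt. Then ε is strictly decreasing on (0, ∞): for all 0 < γ₁ < γ₂ one has ε(γ₂) < ε(γ₁). In particular, the argument map γ ↦ (ln(1+γ) − c)/√(1 − (1+γ)⁻²) is strictly increasing on (0, ∞) for every constant c ≥ 0. -/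
open MeasureTheory

/-- The Gaussian Q-function `Q(x) = (1/√(2π)) ∫_x^∞ e^{-t²/2} dt`. -/
noncomputable def gaussQ (x : ℝ) : ℝ :=
  (Real.sqrt (2 * Real.pi))⁻¹ * ∫ t in Set.Ioi x, Real.exp (-t ^ 2 / 2)

/-- Shannon capacity `C(γ) = log₂(1+γ)`. -/
noncomputable def shannonC (γ : ℝ) : ℝ := Real.logb 2 (1 + γ)

/-- Channel dispersion `V(γ) = (1 - (1+γ)⁻²)(log₂ e)²`. -/
noncomputable def dispersionV (γ : ℝ) : ℝ :=
  (1 - ((1 + γ) ^ 2)⁻¹) * (Real.logb 2 (Real.exp 1)) ^ 2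

/-- Finite-blocklength decoding failure probability
`ε(γ) = Q((C(γ) - b/l)/√(V(γ)/l))`. -/
noncomputable def decodingFailure (l b γ : ℝ) : ℝ :=
  gaussQ ((shannonC γ - b / l) / Real.sqrt (dispersionV γ / l))

lemma integrable_gauss : Integrable (fun t : ℝ => Real.exp (-t ^ 2 / 2)) := by
  have h := integrable_exp_neg_mul_sq (by norm_num : (0:ℝ) < 1/2)
  convert h using 2 with t
  ring_nf

lemma gaussQ_strictAnti {x y : ℝ} (h : x < y) : gaussQ y < gaussQ x := by
  unfold gaussQ
  have hpi : 0 < Real.sqrt (2 * Real.pi) := Real.sqrt_pos.mpr (by positivity)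
  refine mul_lt_mul_of_pos_left ?_ (inv_pos.mpr hpi)
  have hint := integrable_gauss
  have hsplit : (∫ t in Set.Ioi x, Real.exp (-t ^ 2 / 2)) =
      (∫ t in Set.Ioc x y, Real.exp (-t ^ 2 / 2)) +
      ∫ t in Set.Ioi y, Real.exp (-t ^ 2 / 2) := by
    rw [← setIntegral_union (Set.Ioc_disjoint_Ioi le_rfl) measurableSet_Ioi
      hint.integrableOn hint.integrableOn, Set.Ioc_union_Ioi_eq_Ioi h.le]
  have hpos : 0 < ∫ t in Set.Ioc x y, Real.exp (-t ^ 2 / 2) := by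
    rw [← intervalIntegral.integral_of_le h.le]
    exact intervalIntegral.intervalIntegral_pos_of_pos
      hint.intervalIntegrable (fun t => Real.exp_pos _) h
  linarith

/-- The core strict monotonicity. -/
lemma aux_strictMono (c : ℝ) (hc : 0 ≤ c) :
    StrictMonoOn (fun γ : ℝ => (Real.log (1 + γ) - c) / Real.sqrt (1 - ((1 + γ) ^ 2)⁻¹))
      (Set.Ioi (0 : ℝ)) := by
  have key : ∀ γ ∈ Set.Ioi (0:ℝ), HasDerivAt
      (fun γ : ℝ => (Real.log (1 + γ) - c) / Real.sqrt (1 - ((1 + γ) ^ 2)⁻¹))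
      (((1 + γ)⁻¹ * Real.sqrt (1 - ((1 + γ) ^ 2)⁻¹) -
        (Real.log (1 + γ) - c) * ((2 * (1 + γ) / ((1 + γ) ^ 2) ^ 2) /
          (2 * Real.sqrt (1 - ((1 + γ) ^ 2)⁻¹)))) / Real.sqrt (1 - ((1 + γ) ^ 2)⁻¹) ^ 2)
      γ := by
    intro γ hγ
    have hγ0 : (0:ℝ) < γ := hγ
    have hu0 : (0:ℝ) < 1 + γ := by linarith
    have hg : 0 < 1 - ((1 + γ) ^ 2)⁻¹ := by
      have : ((1 + γ) ^ 2)⁻¹ < 1 := by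
        rw [inv_lt_one_iff₀]; right; nlinarith
      linarith
    have h1 : HasDerivAt (fun γ : ℝ => Real.log (1 + γ) - c) (1 + γ)⁻¹ γ := by
      have := ((hasDerivAt_id γ).const_add 1).log (ne_of_gt hu0)
      simpa [one_div] using this.sub_const c
    have h2 : HasDerivAt (fun γ : ℝ => 1 - ((1 + γ) ^ 2)⁻¹)
        (2 * (1 + γ) / ((1 + γ) ^ 2) ^ 2) γ := by
      have hsq : HasDerivAt (fun γ : ℝ => (1 + γ) ^ 2) (2 * (1 + γ)) γ := by
        have := ((hasDerivAt_id γ).const_add 1).pow 2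
        simpa [mul_comm, Pi.pow_def] using this
      have := (hsq.inv (by positivity)).const_sub 1
      simpa [div_eq_mul_inv] using this
    have h3 : HasDerivAt (fun γ : ℝ => Real.sqrt (1 - ((1 + γ) ^ 2)⁻¹))
        ((2 * (1 + γ) / ((1 + γ) ^ 2) ^ 2) / (2 * Real.sqrt (1 - ((1 + γ) ^ 2)⁻¹))) γ :=
      h2.sqrt (ne_of_gt hg)
    exact h1.div h3 (by rw [Real.sqrt_ne_zero']; exact hg)
  have hderivpos : ∀ γ ∈ Set.Ioi (0:ℝ), 0 <
      (((1 + γ)⁻¹ * Real.sqrt (1 - ((1 + γ) ^ 2)⁻¹) -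
        (Real.log (1 + γ) - c) * ((2 * (1 + γ) / ((1 + γ) ^ 2) ^ 2) /
          (2 * Real.sqrt (1 - ((1 + γ) ^ 2)⁻¹)))) / Real.sqrt (1 - ((1 + γ) ^ 2)⁻¹) ^ 2) := by
    intro γ hγ
    have hγ0 : (0:ℝ) < γ := hγ
    have hu0 : (0:ℝ) < 1 + γ := by linarith
    have hg : 0 < 1 - ((1 + γ) ^ 2)⁻¹ := by
      have : ((1 + γ) ^ 2)⁻¹ < 1 := by
        rw [inv_lt_one_iff₀]; right; nlinarith
      linarith
    have hlog : Real.log (1 + γ) ≤ γ := by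
      have := Real.log_le_sub_one_of_pos hu0
      linarith
    set s := Real.sqrt (1 - ((1 + γ) ^ 2)⁻¹) with hsdef
    have hs : 0 < s := Real.sqrt_pos.mpr hg
    have hs2 : s ^ 2 = 1 - ((1 + γ) ^ 2)⁻¹ := Real.sq_sqrt hg.le
    refine div_pos ?_ (by positivity)
    rw [sub_pos]
    have hfact : 2 * (1 + γ) / ((1 + γ) ^ 2) ^ 2 / (2 * s) = (((1 + γ) ^ 3) * s)⁻¹ := by
      field_simp
    rw [hfact]
    have hg' : s ^ 2 * (1 + γ) ^ 2 = (1 + γ) ^ 2 - 1 := by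
      rw [hs2]; field_simp
    have hkey : Real.log (1 + γ) - c < s ^ 2 * (1 + γ) ^ 2 := by nlinarith
    calc (Real.log (1 + γ) - c) * (((1 + γ) ^ 3) * s)⁻¹
        < (s ^ 2 * (1 + γ) ^ 2) * (((1 + γ) ^ 3) * s)⁻¹ :=
          mul_lt_mul_of_pos_right hkey (by positivity)
      _ = (1 + γ)⁻¹ * s := by field_simp
  have hcont : ContinuousOn
      (fun γ : ℝ => (Real.log (1 + γ) - c) / Real.sqrt (1 - ((1 + γ) ^ 2)⁻¹))
      (Set.Ioi (0:ℝ)) :=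
    fun γ hγ => ((key γ hγ).differentiableAt.continuousAt).continuousWithinAt
  refine strictMonoOn_of_deriv_pos (convex_Ioi (0:ℝ)) hcont ?_
  intro γ hγ
  rw [interior_Ioi] at hγ
  rw [(key γ hγ).deriv]
  exact hderivpos γ hγ

/-- The finite-blocklength decoding failure probability is strictly decreasing in
the SNR on `(0, ∞)`; in particular, for every `c ≥ 0` the map
`γ ↦ (ln(1+γ) - c)/√(1 - (1+γ)⁻²)` is strictly increasing on `(0, ∞)`. -/
theorem decodingFailure_strictAnti (l b : ℝ) (hl : 0 < l) (hb : 0 ≤ b) :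
    (∀ γ₁ γ₂ : ℝ, 0 < γ₁ → γ₁ < γ₂ →
      decodingFailure l b γ₂ < decodingFailure l b γ₁) ∧
    (∀ c : ℝ, 0 ≤ c →
      StrictMonoOn (fun γ : ℝ => (Real.log (1 + γ) - c) / Real.sqrt (1 - ((1 + γ) ^ 2)⁻¹))
        (Set.Ioi (0 : ℝ))) := by
  constructor
  · intro γ₁ γ₂ h1 h12
    have hc : 0 ≤ b * Real.log 2 / l := by
      have := Real.log_nonneg (by norm_num : (1:ℝ) ≤ 2)
      positivity
    have hmono := aux_strictMono _ hc
    have hlog2 : (0:ℝ) < Real.log 2 := Real.log_pos (by norm_num)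
    have harg : ∀ γ : ℝ, 0 < γ →
        (shannonC γ - b / l) / Real.sqrt (dispersionV γ / l) =
        Real.sqrt l * ((Real.log (1 + γ) - b * Real.log 2 / l) /
          Real.sqrt (1 - ((1 + γ) ^ 2)⁻¹)) := by
      intro γ hγ
      have hu0 : (0:ℝ) < 1 + γ := by linarith
      have hg : 0 < 1 - ((1 + γ) ^ 2)⁻¹ := by
        have : ((1 + γ) ^ 2)⁻¹ < 1 := by
          rw [inv_lt_one_iff₀]; right; nlinarith
        linarith
      have hsg : 0 < Real.sqrt (1 - ((1 + γ) ^ 2)⁻¹) := Real.sqrt_pos.mpr hg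
      have hsl : 0 < Real.sqrt l := Real.sqrt_pos.mpr hl
      unfold shannonC dispersionV
      simp only [Real.logb, Real.log_exp]
      have hsq : (1 - ((1 + γ) ^ 2)⁻¹) * (1 / Real.log 2) ^ 2 / l =
          (Real.sqrt (1 - ((1 + γ) ^ 2)⁻¹) / (Real.log 2 * Real.sqrt l)) ^ 2 := by
        symm
        rw [div_pow, mul_pow, Real.sq_sqrt hg.le, Real.sq_sqrt hl.le]
        field_simp
      rw [hsq, Real.sqrt_sq (by positivity)]
      rw [div_div_eq_mul_div, mul_div_assoc']
      congr 1
      field_simp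
    unfold decodingFailure
    rw [harg γ₁ h1, harg γ₂ (h1.trans h12)]
    refine gaussQ_strictAnti ?_
    have hsl : 0 < Real.sqrt l := Real.sqrt_pos.mpr hl
    exact mul_lt_mul_of_pos_left
      (hmono (Set.mem_Ioi.mpr h1) (Set.mem_Ioi.mpr (h1.trans h12)) h12) hsl
  · exact fun c hc => aux_strictMono c hc
end
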